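/- For every real y ≥ 0, every integer J ≥ 1, and all nonnegative integers m_1, …, m_J with m = m_1 + ⋯ + m_J ≥ 1, one has ∏_{i=1}^{m} ( y + i/m ) ≤ ∏_{j=1}^{J} ∏_{i=1}^{m_j} ( y + i/m_j ), where an empty product equals 1. -/

import Mathlib

open Finset

private lemma davisson_key (y : ℝ) (hy : 0 ≤ y) (a b : ℕ) :
    ∏ k ∈ Finset.range (a + b), (y + ((k : ℝ) + 1) / ((a + b : ℕ) : ℝ)) ≤
      (∏ i ∈ Finset.range a, (y + ((i : ℝ) + 1) / (a : ℝ))) *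
        ∏ j ∈ Finset.range b, (y + ((j : ℝ) + 1) / (b : ℝ)) := by
  rcases Nat.eq_zero_or_pos a with rfl | ha
  · simp
  rcases Nat.eq_zero_or_pos b with rfl | hb
  · simp
  set c : ℕ → ℕ := fun i => ((Finset.range b).filter (fun j => (j + 1) * a < (i + 1) * b)).card
    with hc
  set d : ℕ → ℕ := fun j => ((Finset.range a).filter (fun i => (i + 1) * b ≤ (j + 1) * a)).card
    with hd
  set rk : ℕ ⊕ ℕ → ℕ := Sum.elim (fun i => i + c i) (fun j => j + d j) with hrk
  have hc_le : ∀ i, c i ≤ b := fun i => (Finset.card_filter_le _ _).trans_eq (card_range b)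
  have hd_le : ∀ j, d j ≤ a := fun j => (Finset.card_filter_le _ _).trans_eq (card_range a)
  have hcmono : ∀ ⦃i i'⦄, i ≤ i' → c i ≤ c i' := by
    intro i i' h
    apply Finset.card_le_card
    intro x hx
    rw [Finset.mem_filter] at hx ⊢
    exact ⟨hx.1, hx.2.trans_le (Nat.mul_le_mul_right b (by omega))⟩
  have hdmono : ∀ ⦃j j'⦄, j ≤ j' → d j ≤ d j' := by
    intro j j' h
    apply Finset.card_le_card
    intro x hx
    rw [Finset.mem_filter] at hx ⊢
    exact ⟨hx.1, hx.2.trans (Nat.mul_le_mul_right a (by omega))⟩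
  have hac : ∀ i, a * c i ≤ (i + 1) * b := by
    intro i
    rcases Finset.eq_empty_or_nonempty
        ((Finset.range b).filter (fun j => (j + 1) * a < (i + 1) * b)) with he | hne
    · simp [hc, he]
    · set s := (Finset.range b).filter (fun j => (j + 1) * a < (i + 1) * b) with hs
      have hM := s.max'_mem hne
      have hMlt : (s.max' hne + 1) * a < (i + 1) * b := (Finset.mem_filter.mp hM).2
      have hcard : c i ≤ s.max' hne + 1 := by
        have : s ⊆ Finset.range (s.max' hne + 1) := fun x hx =>
          Finset.mem_range.mpr (Nat.lt_succ_of_le (s.le_max' x hx))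
        simpa [hc, hs] using (Finset.card_le_card this).trans_eq (card_range _)
      calc a * c i ≤ a * (s.max' hne + 1) := Nat.mul_le_mul_left a hcard
        _ = (s.max' hne + 1) * a := Nat.mul_comm _ _
        _ ≤ (i + 1) * b := hMlt.le
  have hbd : ∀ j, b * d j ≤ (j + 1) * a := by
    intro j
    rcases Finset.eq_empty_or_nonempty
        ((Finset.range a).filter (fun i => (i + 1) * b ≤ (j + 1) * a)) with he | hne
    · simp [hd, he]
    · set s := (Finset.range a).filter (fun i => (i + 1) * b ≤ (j + 1) * a) with hs
      have hM := s.max'_mem hne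
      have hMle : (s.max' hne + 1) * b ≤ (j + 1) * a := (Finset.mem_filter.mp hM).2
      have hcard : d j ≤ s.max' hne + 1 := by
        have : s ⊆ Finset.range (s.max' hne + 1) := fun x hx =>
          Finset.mem_range.mpr (Nat.lt_succ_of_le (s.le_max' x hx))
        simpa [hd, hs] using (Finset.card_le_card this).trans_eq (card_range _)
      calc b * d j ≤ b * (s.max' hne + 1) := Nat.mul_le_mul_left b hcard
        _ = (s.max' hne + 1) * b := Nat.mul_comm _ _
        _ ≤ (j + 1) * a := hMle
  -- cross lemmas
  have h1 : ∀ i j, i < a → (i + 1) * b ≤ (j + 1) * a → i + 1 ≤ d j := by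
    intro i j hia hle
    have : Finset.range (i + 1) ⊆
        (Finset.range a).filter (fun x => (x + 1) * b ≤ (j + 1) * a) := by
      intro x hx
      rw [Finset.mem_range] at hx
      refine Finset.mem_filter.mpr ⟨Finset.mem_range.mpr (by omega), ?_⟩
      exact le_trans (Nat.mul_le_mul_right b (by omega)) hle
    simpa [hd] using (Finset.card_le_card this).trans_eq' (card_range _).symm
  have h2 : ∀ i j, (i + 1) * b ≤ (j + 1) * a → c i ≤ j := by
    intro i j hle
    have : (Finset.range b).filter (fun x => (x + 1) * a < (i + 1) * b) ⊆
        Finset.range j := by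
      intro x hx
      have hx' := (Finset.mem_filter.mp hx).2
      have : (x + 1) * a < (j + 1) * a := lt_of_lt_of_le hx' hle
      exact Finset.mem_range.mpr (by
        have := Nat.lt_of_mul_lt_mul_right this
        omega)
    simpa [hc] using (Finset.card_le_card this).trans_eq (card_range _)
  have h3 : ∀ i j, j < b → (j + 1) * a < (i + 1) * b → j + 1 ≤ c i := by
    intro i j hjb hlt
    have : Finset.range (j + 1) ⊆
        (Finset.range b).filter (fun x => (x + 1) * a < (i + 1) * b) := by
      intro x hx
      rw [Finset.mem_range] at hx
      refine Finset.mem_filter.mpr ⟨Finset.mem_range.mpr (by omega), ?_⟩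
      exact lt_of_le_of_lt (Nat.mul_le_mul_right a (by omega)) hlt
    simpa [hc] using (Finset.card_le_card this).trans_eq' (card_range _).symm
  have h4 : ∀ i j, (j + 1) * a < (i + 1) * b → d j ≤ i := by
    intro i j hlt
    have : (Finset.range a).filter (fun x => (x + 1) * b ≤ (j + 1) * a) ⊆
        Finset.range i := by
      intro x hx
      have hx' := (Finset.mem_filter.mp hx).2
      have : (x + 1) * b < (i + 1) * b := lt_of_le_of_lt hx' hlt
      exact Finset.mem_range.mpr (by
        have := Nat.lt_of_mul_lt_mul_right this
        omega)
    simpa [hd] using (Finset.card_le_card this).trans_eq (card_range _)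
  -- step 1 : reindex
  have hmaps : ∀ x ∈ (Finset.range a).disjSum (Finset.range b), rk x ∈ Finset.range (a + b) := by
    rintro (i | j) hx
    · rw [Finset.inl_mem_disjSum, Finset.mem_range] at hx
      have := hc_le i
      simp only [hrk, Sum.elim_inl, Finset.mem_range]
      omega
    · rw [Finset.inr_mem_disjSum, Finset.mem_range] at hx
      have := hd_le j
      simp only [hrk, Sum.elim_inr, Finset.mem_range]
      omega
  have hinj : ∀ x₁ x₂ : ℕ ⊕ ℕ, x₁ ∈ (Finset.range a).disjSum (Finset.range b) →
      x₂ ∈ (Finset.range a).disjSum (Finset.range b) → rk x₁ = rk x₂ → x₁ = x₂ := by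
    rintro (i | j) (i' | j') hx hx' heq
    · simp only [hrk, Sum.elim_inl] at heq
      rcases lt_trichotomy i i' with h | h | h
      · have := hcmono h.le; omega
      · exact congrArg Sum.inl h
      · have := hcmono h.le; omega
    · rw [Finset.inl_mem_disjSum, Finset.mem_range] at hx
      rw [Finset.inr_mem_disjSum, Finset.mem_range] at hx'
      exfalso
      simp only [hrk, Sum.elim_inl, Sum.elim_inr] at heq
      rcases le_or_gt ((i + 1) * b) ((j' + 1) * a) with h | h
      · have := h1 i j' hx h; have := h2 i j' h; omega
      · have := h3 i j' hx' h; have := h4 i j' h; omega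
    · rw [Finset.inr_mem_disjSum, Finset.mem_range] at hx
      rw [Finset.inl_mem_disjSum, Finset.mem_range] at hx'
      exfalso
      simp only [hrk, Sum.elim_inl, Sum.elim_inr] at heq
      rcases le_or_gt ((i' + 1) * b) ((j + 1) * a) with h | h
      · have := h1 i' j hx' h; have := h2 i' j h; omega
      · have := h3 i' j hx h; have := h4 i' j h; omega
    · simp only [hrk, Sum.elim_inr] at heq
      rcases lt_trichotomy j j' with h | h | h
      · have := hdmono h.le; omega
      · exact congrArg Sum.inr h
      · have := hdmono h.le; omega
  have step1 : ∏ k ∈ Finset.range (a + b), (y + ((k : ℝ) + 1) / ((a + b : ℕ) : ℝ)) =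
      ∏ x ∈ (Finset.range a).disjSum (Finset.range b),
        (y + ((rk x : ℝ) + 1) / ((a + b : ℕ) : ℝ)) := by
    refine (Finset.prod_bij (fun x _ => rk x) (fun x hx => hmaps x hx)
      (fun x₁ h₁ x₂ h₂ he => hinj x₁ x₂ h₁ h₂ he) ?_ (fun x hx => rfl)).symm
    intro k hk
    obtain ⟨x, hx, he⟩ := Finset.surj_on_of_inj_on_of_card_le
      (fun x (_ : x ∈ (Finset.range a).disjSum (Finset.range b)) => rk x) hmaps
      (fun x₁ x₂ h₁ h₂ he => hinj x₁ x₂ h₁ h₂ he)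
      (by rw [Finset.card_disjSum, Finset.card_range, Finset.card_range, Finset.card_range])
      k hk
    exact ⟨x, hx, he.symm⟩
  rw [step1, ← Finset.prod_sumElim]
  apply Finset.prod_le_prod
  · rintro (i | j) hx
    · positivity
    · positivity
  · rintro (i | j) hx
    · rw [Finset.inl_mem_disjSum, Finset.mem_range] at hx
      simp only [hrk, Sum.elim_inl]
      have hma : (0 : ℝ) < (a : ℝ) := by exact_mod_cast ha
      have hmm : (0 : ℝ) < ((a + b : ℕ) : ℝ) := by exact_mod_cast Nat.add_pos_left ha b
      have keyR : (a : ℝ) * (c i) ≤ ((i : ℝ) + 1) * b := by exact_mod_cast hac i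
      apply add_le_add_right
      rw [div_le_div_iff₀ hmm hma]
      push_cast
      nlinarith [keyR]
    · rw [Finset.inr_mem_disjSum, Finset.mem_range] at hx
      simp only [hrk, Sum.elim_inr]
      have hmb : (0 : ℝ) < (b : ℝ) := by exact_mod_cast hb
      have hmm : (0 : ℝ) < ((a + b : ℕ) : ℝ) := by exact_mod_cast Nat.add_pos_left ha b
      have keyR : (b : ℝ) * (d j) ≤ ((j : ℝ) + 1) * a := by exact_mod_cast hbd j
      apply add_le_add_right
      rw [div_le_div_iff₀ hmm hmb]
      push_cast
      nlinarith [keyR]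

private lemma davisson_general (y : ℝ) (hy : 0 ≤ y) {ι : Type*} [DecidableEq ι]
    (s : Finset ι) (m : ι → ℕ) :
    ∏ k ∈ Finset.range (∑ j ∈ s, m j), (y + ((k : ℝ) + 1) / ((∑ j ∈ s, m j : ℕ) : ℝ)) ≤
      ∏ j ∈ s, ∏ i ∈ Finset.range (m j), (y + ((i : ℝ) + 1) / (m j : ℝ)) := by
  induction s using Finset.induction_on with
  | empty => simp
  | @insert j s hj ih =>
    rw [Finset.sum_insert hj, Finset.prod_insert hj]
    calc ∏ k ∈ Finset.range (m j + ∑ i ∈ s, m i),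
        (y + ((k : ℝ) + 1) / ((m j + ∑ i ∈ s, m i : ℕ) : ℝ))
        ≤ (∏ i ∈ Finset.range (m j), (y + ((i : ℝ) + 1) / (m j : ℝ))) *
          ∏ k ∈ Finset.range (∑ i ∈ s, m i),
            (y + ((k : ℝ) + 1) / ((∑ i ∈ s, m i : ℕ) : ℝ)) := davisson_key y hy _ _
      _ ≤ _ := by
          apply mul_le_mul_of_nonneg_left ih
          apply Finset.prod_nonneg
          intro i _
          positivity

/-- For `y ≥ 0`, `J ≥ 1` and nonnegative integers `m₁, …, m_J` with
`m = m₁ + ⋯ + m_J ≥ 1`, one has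
`∏_{i=1}^{m} (y + i/m) ≤ ∏_{j=1}^{J} ∏_{i=1}^{mⱼ} (y + i/mⱼ)`,
where an empty product equals 1. -/
theorem davisson_product_inequality (y : ℝ) (hy : 0 ≤ y) (J : ℕ) (hJ : 1 ≤ J)
    (m : Fin J → ℕ) (hm : 1 ≤ ∑ j, m j) :
    ∏ i ∈ Finset.range (∑ j, m j), (y + ((i : ℝ) + 1) / ((∑ j, m j : ℕ) : ℝ)) ≤
      ∏ j, ∏ i ∈ Finset.range (m j), (y + ((i : ℝ) + 1) / (m j : ℝ)) :=
  davisson_general y hy Finset.univ m
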